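/- Let μ be a compactly supported Borel probability measure on ℝ^d × ℝ^d with velocity barycenter v̄ = (v̄_1,…,v̄_d). Let k ∈ {1,…,d}, x̃ ∈ ℝ^d, a_k ∈ ℝ and X, W_k ≥ 0, and suppose supp(μ) ⊆ B(x̃, X) × {w ∈ ℝ^d : a_k ≤ w_k ≤ a_k + W_k}. Set r⁻ = (φ(0)/(φ(0) + φ(2X)))·(v̄_k − a_k). Then for every (x, v) ∈ ℝ^d × ℝ^d with ‖x − x̃‖ ≤ X and v_k − v̄_k < −r⁻, one has ⟨ξ[μ](x, v), e_k⟩·(v_k − v̄_k) < 0, where e_k is the k-th standard basis vector of ℝ^d. -/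

import Mathlib

open MeasureTheory Metric Set

/-- The (topological) support of a measure. -/
def msupp {α : Type*} [TopologicalSpace α] [MeasurableSpace α]
    (μ : Measure α) : Set α :=
  {x | ∀ U : Set α, IsOpen U → x ∈ U → 0 < μ U}

/-- The Cucker–Smale interaction kernel. -/
noncomputable def xi {d : ℕ} (φ : ℝ → ℝ)
    (μ : Measure (EuclideanSpace ℝ (Fin d) × EuclideanSpace ℝ (Fin d)))
    (x v : EuclideanSpace ℝ (Fin d)) : EuclideanSpace ℝ (Fin d) :=
  ∫ p, φ (‖x - p.1‖) • (p.2 - v) ∂μ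

set_option maxHeartbeats 1000000 in
theorem stmt2 {d : ℕ} (hd : 0 < d) (φ : ℝ → ℝ) (hφc : Continuous φ)
    (hφa : Antitone φ) (hφp : ∀ r : ℝ, 0 < φ r)
    (μ : Measure (EuclideanSpace ℝ (Fin d) × EuclideanSpace ℝ (Fin d)))
    [IsProbabilityMeasure μ] (hcs : IsCompact (msupp μ))
    (k : Fin d) (xt : EuclideanSpace ℝ (Fin d)) (ak X Wk : ℝ)
    (hX : 0 ≤ X) (hWk : 0 ≤ Wk)
    (hsupp : msupp μ ⊆
      (closedBall xt X) ×ˢ {w : EuclideanSpace ℝ (Fin d) | ak ≤ w k ∧ w k ≤ ak + Wk})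
    (vbar : EuclideanSpace ℝ (Fin d)) (hvbar : vbar = ∫ p, p.2 ∂μ)
    (rm : ℝ) (hrm : rm = φ 0 / (φ 0 + φ (2 * X)) * (vbar k - ak))
    (x v : EuclideanSpace ℝ (Fin d)) (hx : ‖x - xt‖ ≤ X) (hv : v k - vbar k < -rm) :
    xi φ μ x v k * (v k - vbar k) < 0 := by
  set S := msupp μ with hS
  -- complement of support is null
  have hS0 : μ Sᶜ = 0 := by
    apply measure_null_of_locally_null
    intro p hp
    simp only [hS, msupp, mem_compl_iff, mem_setOf_eq, not_forall] at hp
    obtain ⟨U, hUo, hpU, hU0⟩ := hp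
    exact ⟨U, mem_nhdsWithin_of_mem_nhds (hUo.mem_nhds hpU),
      le_antisymm (le_of_not_gt hU0) zero_le⟩
  have hae : ∀ᵐ p ∂μ, p ∈ S := by
    rw [ae_iff]; exact hS0
  obtain ⟨R, hR⟩ := hcs.isBounded.subset_closedBall 0
  have hRb : ∀ p ∈ S, ‖p.2‖ ≤ R := fun p hp =>
    le_trans (norm_snd_le p) (by simpa using hR hp)
  set c0 := φ 0 with hc0def
  set c2 := φ (2 * X) with hc2def
  have hc2 : 0 < c2 := hφp _
  have hc0 : 0 < c0 := hφp _
  have hle : c2 ≤ c0 := hφa (by linarith)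
  -- integrability of p.2
  have hmeas2 : AEStronglyMeasurable
      (fun p : EuclideanSpace ℝ (Fin d) × EuclideanSpace ℝ (Fin d) => p.2) μ :=
    continuous_snd.aestronglyMeasurable
  have hi2 : Integrable (fun p : EuclideanSpace ℝ (Fin d) × EuclideanSpace ℝ (Fin d) => p.2) μ := by
    refine Integrable.mono' (integrable_const R) hmeas2 ?_
    filter_upwards [hae] with p hp using hRb p hp
  -- integrability of the kernel integrand
  have hcont : Continuous (fun p : EuclideanSpace ℝ (Fin d) × EuclideanSpace ℝ (Fin d) =>
      φ (‖x - p.1‖) • (p.2 - v)) := by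
    exact (hφc.comp ((continuous_const.sub continuous_fst).norm)).smul
      (continuous_snd.sub continuous_const)
  have hiv : Integrable (fun p : EuclideanSpace ℝ (Fin d) × EuclideanSpace ℝ (Fin d) =>
      φ (‖x - p.1‖) • (p.2 - v)) μ := by
    refine Integrable.mono' (integrable_const (c0 * (R + ‖v‖))) hcont.aestronglyMeasurable ?_
    filter_upwards [hae] with p hp
    rw [norm_smul]
    have h1 : ‖φ (‖x - p.1‖)‖ ≤ c0 := by
      rw [Real.norm_eq_abs, abs_of_pos (hφp _)]
      exact hφa (norm_nonneg _)
    have h2 : ‖p.2 - v‖ ≤ R + ‖v‖ := by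
      calc ‖p.2 - v‖ ≤ ‖p.2‖ + ‖v‖ := norm_sub_le _ _
        _ ≤ R + ‖v‖ := by linarith [hRb p hp]
    have hRv : (0:ℝ) ≤ R + ‖v‖ := le_trans (norm_nonneg _) h2
    exact mul_le_mul h1 h2 (norm_nonneg _) hc0.le
  -- scalar version of xi component
  have hxik : xi φ μ x v k = ∫ p, φ (‖x - p.1‖) * (p.2 k - v k) ∂μ := by
    have h := (EuclideanSpace.proj (𝕜 := ℝ) k).integral_comp_comm hiv
    simp only [EuclideanSpace.proj, PiLp.proj_apply] at h
    rw [xi, ← h]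
    refine integral_congr_ae (Filter.Eventually.of_forall fun p => ?_)
    simp [smul_eq_mul, mul_sub]
  have hvbark : vbar k = ∫ p, p.2 k ∂μ := by
    have h := (EuclideanSpace.proj (𝕜 := ℝ) k).integral_comp_comm hi2
    simp only [EuclideanSpace.proj, PiLp.proj_apply] at h
    rw [hvbar, ← h]
  -- integrability of scalar versions
  have hik : Integrable (fun p : EuclideanSpace ℝ (Fin d) × EuclideanSpace ℝ (Fin d) =>
      p.2 k) μ := by
    have h := (EuclideanSpace.proj (𝕜 := ℝ) k).integrable_comp hi2
    simpa only [EuclideanSpace.proj, PiLp.proj_apply] using h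
  have hifk : Integrable (fun p : EuclideanSpace ℝ (Fin d) × EuclideanSpace ℝ (Fin d) =>
      φ (‖x - p.1‖) * (p.2 k - v k)) μ := by
    have h := (EuclideanSpace.proj (𝕜 := ℝ) k).integrable_comp hiv
    simp only [EuclideanSpace.proj, PiLp.proj_apply] at h
    refine h.congr (Filter.Eventually.of_forall fun p => ?_)
    simp [smul_eq_mul, mul_sub]
  -- ak ≤ vbar k
  have hva : ak ≤ vbar k := by
    rw [hvbark]
    have : ∫ _p, ak ∂μ ≤ ∫ p, p.2 k ∂μ := by
      refine integral_mono_ae (integrable_const ak) hik ?_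
      filter_upwards [hae] with p hp using (hsupp hp).2.1
    simpa using this
  set s := vbar k - v k with hsdef
  have hrs : rm < s := by simp only [hsdef]; linarith
  set D := vbar k - ak with hDdef
  have hD : 0 ≤ D := by simp only [hDdef]; linarith
  have hsum : 0 < c0 + c2 := by linarith
  have hs' : c0 * D < s * (c0 + c2) := by
    have := hrs
    rw [hrm] at this
    rw [div_mul_eq_mul_div, div_lt_iff₀ hsum] at this
    linarith [this]
  have hspos : 0 < s := by nlinarith
  set M := max (v k - ak) 0 with hMdef
  -- pointwise bound on support
  have hpt : ∀ᵐ p ∂μ, c2 * (p.2 k - v k) - (c0 - c2) * M ≤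
      φ (‖x - p.1‖) * (p.2 k - v k) := by
    filter_upwards [hae] with p hp
    have hak : ak ≤ p.2 k := (hsupp hp).2.1
    have hr2 : ‖x - p.1‖ ≤ 2 * X := by
      have h1 : ‖p.1 - xt‖ ≤ X := by
        have := (hsupp hp).1
        simpa [dist_eq_norm] using this
      calc ‖x - p.1‖ = ‖(x - xt) - (p.1 - xt)‖ := by abel_nf
        _ ≤ ‖x - xt‖ + ‖p.1 - xt‖ := norm_sub_le _ _
        _ ≤ 2 * X := by linarith
    have hφlb : c2 ≤ φ (‖x - p.1‖) := hφa hr2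
    have hφub : φ (‖x - p.1‖) ≤ c0 := hφa (norm_nonneg _)
    have hM0 : 0 ≤ M := le_max_right _ _
    set t := p.2 k - v k with htdef
    rcases le_or_gt 0 t with ht | ht
    · nlinarith
    · have hmle : -t ≤ M := by
        have : v k - p.2 k ≤ v k - ak := by linarith
        have : -t ≤ v k - ak := by simp only [htdef]; linarith
        exact le_trans this (le_max_left _ _)
      nlinarith
  -- integrate
  have hglb : Integrable (fun p : EuclideanSpace ℝ (Fin d) × EuclideanSpace ℝ (Fin d) =>
      c2 * (p.2 k - v k) - (c0 - c2) * M) μ := by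
    exact ((hik.sub (integrable_const (v k))).const_mul c2).sub (integrable_const _)
  have hik2 : Integrable (fun p : EuclideanSpace ℝ (Fin d) × EuclideanSpace ℝ (Fin d) =>
      p.2 k - v k) μ := by exact hik.sub (integrable_const _)
  have hglb2 : Integrable (fun p : EuclideanSpace ℝ (Fin d) × EuclideanSpace ℝ (Fin d) =>
      c2 * (p.2 k - v k)) μ := by exact hik2.const_mul c2
  have hint : c2 * s - (c0 - c2) * M ≤ xi φ μ x v k := by
    rw [hxik]
    have h1 := integral_mono_ae hglb hifk hpt
    have h2 : ∫ p, (c2 * (p.2 k - v k) - (c0 - c2) * M) ∂μ = c2 * s - (c0 - c2) * M := by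
      rw [integral_sub hglb2 (integrable_const _),
        integral_const_mul c2 _, integral_sub hik (integrable_const _), integral_const, integral_const]
      simp [hsdef, hvbark]
    linarith [h1, h2.symm.le]
  -- final arithmetic
  have hxipos : 0 < xi φ μ x v k := by
    have hMval : M = max (D - s) 0 := by
      simp only [hMdef, hDdef, hsdef]
      ring_nf
    rcases le_or_gt (D - s) 0 with h | h
    · have : M = 0 := by rw [hMval, max_eq_right h]
      rw [this] at hint
      nlinarith
    · have : M = D - s := by rw [hMval, max_eq_left h.le]
      rw [this] at hint
      nlinarith
  have hvneg : v k - vbar k < 0 := by linarith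
  exact mul_neg_of_pos_of_neg hxipos hvneg
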